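/- Let q : ℝ≥0 → ℝ be continuous with q_t → λ/μ as t → ∞, where λ, μ > 0. Then e^{-2μ(t - t₀)} ∫_{t₀}^{t} e^{2μ(s - t₀)} (λ + μ·q_s) ds converges to λ/μ as t → ∞, for any fixed t₀ ≥ 0. -/

import Mathlib

open Filter Real MeasureTheory intervalIntegral

lemma key_int (c t₀ a b : ℝ) (hc : c ≠ 0) :
    ∫ s in a..b, Real.exp (c * (s - t₀)) =
      (Real.exp (c * (b - t₀)) - Real.exp (c * (a - t₀))) / c := by
  have hderiv : ∀ x ∈ Set.uIcc a b,
      HasDerivAt (fun s => Real.exp (c * (s - t₀)) / c) (Real.exp (c * (x - t₀))) x := by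
    intro x _
    have h1 : HasDerivAt (fun s : ℝ => c * (s - t₀)) c x := by
      simpa using ((hasDerivAt_id x).sub_const t₀).const_mul c
    have h2 := h1.exp
    have h3 := h2.div_const c
    simpa [mul_div_cancel_right₀ _ hc] using h3
  rw [intervalIntegral.integral_eq_sub_of_hasDerivAt hderiv
    ((Real.continuous_exp.comp (by continuity)).intervalIntegrable a b)]
  ring

lemma exp_neg_tendsto (c t₀ : ℝ) (hc : 0 < c) :
    Tendsto (fun t => Real.exp (-(c * (t - t₀)))) atTop (nhds 0) := by
  apply Real.tendsto_exp_atBot.comp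
  apply tendsto_neg_atTop_atBot.comp
  exact (tendsto_atTop_add_const_right _ (-t₀) tendsto_id).const_mul_atTop hc

lemma aux_err (c t₀ : ℝ) (hc : 0 < c) (g : ℝ → ℝ) (hg : Continuous g)
    (h0 : Tendsto g atTop (nhds 0)) :
    Tendsto (fun t => Real.exp (-(c * (t - t₀))) * ∫ s in t₀..t, Real.exp (c * (s - t₀)) * g s)
      atTop (nhds 0) := by
  rw [Metric.tendsto_atTop]
  intro ε hε
  obtain ⟨T, hT⟩ := Metric.tendsto_atTop.mp h0 (ε * c / 2) (by positivity)
  set T' := max T t₀ with hT'def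
  set C := |∫ s in t₀..T', Real.exp (c * (s - t₀)) * g s| with hCdef
  have hdecay : Tendsto (fun t => Real.exp (-(c * (t - t₀))) * C) atTop (nhds 0) := by
    simpa using (exp_neg_tendsto c t₀ hc).mul_const C
  obtain ⟨N, hN⟩ := Metric.tendsto_atTop.mp hdecay (ε / 2) (by positivity)
  refine ⟨max N T', fun t ht => ?_⟩
  have htN : N ≤ t := le_trans (le_max_left _ _) ht
  have htT' : T' ≤ t := le_trans (le_max_right _ _) ht
  have ht₀T' : t₀ ≤ T' := le_max_right _ _
  have hint1 : IntervalIntegrable (fun s => Real.exp (c * (s - t₀)) * g s) volume t₀ T' :=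
    ((Real.continuous_exp.comp (by continuity)).mul hg).intervalIntegrable _ _
  have hint2 : IntervalIntegrable (fun s => Real.exp (c * (s - t₀)) * g s) volume T' t :=
    ((Real.continuous_exp.comp (by continuity)).mul hg).intervalIntegrable _ _
  have hsplit : (∫ s in t₀..t, Real.exp (c * (s - t₀)) * g s) =
      (∫ s in t₀..T', Real.exp (c * (s - t₀)) * g s) +
      (∫ s in T'..t, Real.exp (c * (s - t₀)) * g s) :=
    (intervalIntegral.integral_add_adjacent_intervals hint1 hint2).symm
  -- bound on tail integral
  have hbound : |∫ s in T'..t, Real.exp (c * (s - t₀)) * g s| ≤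
      ε / 2 * Real.exp (c * (t - t₀)) := by
    have hle : ‖∫ s in T'..t, Real.exp (c * (s - t₀)) * g s‖ ≤
        |∫ s in T'..t, Real.exp (c * (s - t₀)) * (ε * c / 2)| := by
      apply intervalIntegral.norm_integral_le_abs_of_norm_le
      · filter_upwards [MeasureTheory.ae_restrict_mem measurableSet_Ioc] with s hs
        rw [Set.uIoc_of_le htT'] at hs
        have hsT : T ≤ s := le_trans (le_max_left _ _) hs.1.le
        have := hT s hsT
        rw [Real.dist_eq, sub_zero] at this
        have hexp : (0:ℝ) < Real.exp (c * (s - t₀)) := Real.exp_pos _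
        calc ‖Real.exp (c * (s - t₀)) * g s‖ = Real.exp (c * (s - t₀)) * |g s| := by
              rw [Real.norm_eq_abs, abs_mul, abs_of_pos hexp]
          _ ≤ Real.exp (c * (s - t₀)) * (ε * c / 2) := by
              exact mul_le_mul_of_nonneg_left this.le hexp.le
      · exact ((Real.continuous_exp.comp (by continuity)).mul continuous_const).intervalIntegrable _ _
    have hval : (∫ s in T'..t, Real.exp (c * (s - t₀)) * (ε * c / 2)) =
        (Real.exp (c * (t - t₀)) - Real.exp (c * (T' - t₀))) / c * (ε * c / 2) := by
      rw [intervalIntegral.integral_mul_const, key_int c t₀ T' t hc.ne']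
    have hmono : Real.exp (c * (T' - t₀)) ≤ Real.exp (c * (t - t₀)) :=
      Real.exp_le_exp.mpr (by nlinarith)
    have hTexp : (0:ℝ) < Real.exp (c * (T' - t₀)) := Real.exp_pos _
    calc |∫ s in T'..t, Real.exp (c * (s - t₀)) * g s| ≤
        |∫ s in T'..t, Real.exp (c * (s - t₀)) * (ε * c / 2)| := hle
      _ = (Real.exp (c * (t - t₀)) - Real.exp (c * (T' - t₀))) / c * (ε * c / 2) := by
          rw [hval, abs_of_nonneg]
          exact mul_nonneg (div_nonneg (sub_nonneg.mpr hmono) hc.le) (by positivity)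
      _ = ε / 2 * (Real.exp (c * (t - t₀)) - Real.exp (c * (T' - t₀))) := by
          field_simp
      _ ≤ ε / 2 * Real.exp (c * (t - t₀)) := by
          apply mul_le_mul_of_nonneg_left (by linarith) (by positivity)
  have hNb := hN t htN
  rw [Real.dist_eq, sub_zero] at hNb ⊢
  have hexppos : (0:ℝ) < Real.exp (-(c * (t - t₀))) := Real.exp_pos _
  have habsN : Real.exp (-(c * (t - t₀))) * C < ε / 2 := by
    calc Real.exp (-(c * (t - t₀))) * C ≤ |Real.exp (-(c * (t - t₀))) * C| := le_abs_self _
      _ < ε / 2 := hNb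
  calc |Real.exp (-(c * (t - t₀))) * ∫ s in t₀..t, Real.exp (c * (s - t₀)) * g s|
      = Real.exp (-(c * (t - t₀))) * |∫ s in t₀..t, Real.exp (c * (s - t₀)) * g s| := by
        rw [abs_mul, abs_of_pos hexppos]
    _ ≤ Real.exp (-(c * (t - t₀))) * (C + ε / 2 * Real.exp (c * (t - t₀))) := by
        apply mul_le_mul_of_nonneg_left _ hexppos.le
        rw [hsplit]
        calc |(∫ s in t₀..T', Real.exp (c * (s - t₀)) * g s) +
            (∫ s in T'..t, Real.exp (c * (s - t₀)) * g s)| ≤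
            C + |∫ s in T'..t, Real.exp (c * (s - t₀)) * g s| := abs_add_le _ _
          _ ≤ C + ε / 2 * Real.exp (c * (t - t₀)) := by linarith
    _ = Real.exp (-(c * (t - t₀))) * C +
        ε / 2 * (Real.exp (-(c * (t - t₀))) * Real.exp (c * (t - t₀))) := by ring
    _ = Real.exp (-(c * (t - t₀))) * C + ε / 2 := by
        rw [← Real.exp_add]; simp
    _ < ε := by linarith

/-- The limiting variance computation in the quality-driven regime. -/
theorem stmt_7 (lam μ t₀ : ℝ) (hlam : 0 < lam) (hμ : 0 < μ) (ht₀ : 0 ≤ t₀)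
    (q : ℝ → ℝ) (hq : Continuous q) (hlim : Tendsto q atTop (nhds (lam / μ))) :
    Tendsto (fun t : ℝ =>
        exp (-2 * μ * (t - t₀)) * ∫ s in t₀..t, exp (2 * μ * (s - t₀)) * (lam + μ * q s))
      atTop (nhds (lam / μ)) := by
  set c := 2 * μ with hcdef
  have hc : 0 < c := by positivity
  set g : ℝ → ℝ := fun s => μ * q s - lam with hgdef
  have hgcont : Continuous g := (continuous_const.mul hq).sub continuous_const
  have hg0 : Tendsto g atTop (nhds 0) := by
    have := (hlim.const_mul μ).sub_const lam
    simpa [mul_div_cancel₀ _ hμ.ne'] using this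
  have hfun : ∀ t : ℝ,
      Real.exp (-2 * μ * (t - t₀)) * ∫ s in t₀..t, Real.exp (2 * μ * (s - t₀)) * (lam + μ * q s)
      = (1 - Real.exp (-(c * (t - t₀)))) * (2 * lam / c)
        + Real.exp (-(c * (t - t₀))) * ∫ s in t₀..t, Real.exp (c * (s - t₀)) * g s := by
    intro t
    have hi1 : IntervalIntegrable (fun s => Real.exp (c * (s - t₀)) * (2 * lam)) volume t₀ t :=
      ((Real.continuous_exp.comp (by continuity)).mul continuous_const).intervalIntegrable _ _
    have hi2 : IntervalIntegrable (fun s => Real.exp (c * (s - t₀)) * g s) volume t₀ t :=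
      ((Real.continuous_exp.comp (by continuity)).mul hgcont).intervalIntegrable _ _
    have heq : (fun s => Real.exp (2 * μ * (s - t₀)) * (lam + μ * q s))
        = fun s => Real.exp (c * (s - t₀)) * (2 * lam) + Real.exp (c * (s - t₀)) * g s := by
      funext s; rw [hcdef, hgdef]; ring
    rw [heq, intervalIntegral.integral_add hi1 hi2, intervalIntegral.integral_mul_const,
      key_int c t₀ t₀ t hc.ne']
    have hneg : -2 * μ * (t - t₀) = -(c * (t - t₀)) := by rw [hcdef]; ring
    rw [hneg]
    have h0 : c * (t₀ - t₀) = 0 := by ring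
    rw [h0, Real.exp_zero]
    have hXY : Real.exp (-(c * (t - t₀))) * Real.exp (c * (t - t₀)) = 1 := by
      rw [← Real.exp_add]; simp
    field_simp
    nlinarith [hXY]
  have h1 : Tendsto (fun t => (1 - Real.exp (-(c * (t - t₀)))) * (2 * lam / c))
      atTop (nhds (lam / μ)) := by
    have : Tendsto (fun t => 1 - Real.exp (-(c * (t - t₀)))) atTop (nhds 1) := by
      simpa using (tendsto_const_nhds (x := (1:ℝ))).sub (exp_neg_tendsto c t₀ hc)
    have h2 := this.mul_const (2 * lam / c)
    have : (1:ℝ) * (2 * lam / c) = lam / μ := by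
      rw [hcdef]; field_simp
    rwa [this] at h2
  have h2 := aux_err c t₀ hc g hgcont hg0
  have := h1.add h2
  rw [add_zero] at this
  exact this.congr (fun t => (hfun t).symm)
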